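/- Continuous strong comparison principle: Suppose Ω is in addition connected. Let c₁, c₂ : ℝᵈ → ℝ each be twice continuously differentiable on Ω and continuous on cl(Ω). If L[c₁](x) < L[c₂](x) for all x ∈ Ω and c₁(x) ≤ c₂(x) for all x ∈ ∂Ω, then c₁(x) < c₂(x) for all x ∈ Ω. -/

import Mathlib

noncomputable section

/-- Partial derivative in the `i`-th coordinate direction. -/
def pd (d : ℕ) (f : EuclideanSpace ℝ (Fin d) → ℝ) (i : Fin d)
    (x : EuclideanSpace ℝ (Fin d)) : ℝ :=
  fderiv ℝ f x (EuclideanSpace.single i 1)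

/-- The elliptic operator in divergence form
`L[c](x) = −div(D(x)·grad c(x)) + v(x)·grad c(x) + α(x) c(x)`. -/
def Lop (d : ℕ) (D : EuclideanSpace ℝ (Fin d) → Matrix (Fin d) (Fin d) ℝ)
    (v : EuclideanSpace ℝ (Fin d) → EuclideanSpace ℝ (Fin d))
    (α : EuclideanSpace ℝ (Fin d) → ℝ)
    (c : EuclideanSpace ℝ (Fin d) → ℝ) (x : EuclideanSpace ℝ (Fin d)) : ℝ :=
  -(∑ i, pd d (fun y => ∑ j, D y i j * pd d c j y) i x)
    + (∑ i, v x i * pd d c i x) + α x * c x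

/- ### Auxiliary lemmas -/

lemma sum_single_repr {d : ℕ} (x : EuclideanSpace ℝ (Fin d)) :
    ∑ i, x i • EuclideanSpace.single i (1:ℝ) = x := by
  ext j
  rw [WithLp.ofLp_sum, Finset.sum_apply]
  simp [EuclideanSpace.single_apply]

lemma clm_decomp {d : ℕ} (L : EuclideanSpace ℝ (Fin d) →L[ℝ] ℝ)
    (ξ : EuclideanSpace ℝ (Fin d)) :
    L ξ = ∑ i, ξ i * L (EuclideanSpace.single i 1) := by
  conv_lhs => rw [← sum_single_repr ξ]
  rw [map_sum]
  simp [smul_eq_mul]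

lemma pd_contDiffOn {d : ℕ} {Ω : Set (EuclideanSpace ℝ (Fin d))} (hΩ : IsOpen Ω)
    {u : EuclideanSpace ℝ (Fin d) → ℝ} (hu : ContDiffOn ℝ 2 u Ω) (j : Fin d) :
    ContDiffOn ℝ 1 (pd d u j) Ω := by
  have hf : ContDiffOn ℝ 1 (fun y => fderiv ℝ u y) Ω :=
    hu.fderiv_of_isOpen hΩ (by norm_num)
  exact hf.clm_apply contDiffOn_const

lemma pd_differentiableAt {d : ℕ} {Ω : Set (EuclideanSpace ℝ (Fin d))} (hΩ : IsOpen Ω)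
    {u : EuclideanSpace ℝ (Fin d) → ℝ} (hu : ContDiffOn ℝ 2 u Ω) (j : Fin d)
    {y : EuclideanSpace ℝ (Fin d)} (hy : y ∈ Ω) :
    DifferentiableAt ℝ (pd d u j) y :=
  ((pd_contDiffOn hΩ hu j).differentiableOn one_ne_zero).differentiableAt (hΩ.mem_nhds hy)

lemma line_hasDerivAt {d : ℕ} (x₀ ξ : EuclideanSpace ℝ (Fin d)) (t : ℝ) :
    HasDerivAt (fun s : ℝ => x₀ + s • ξ) ξ t := by
  simpa using ((hasDerivAt_id t).smul_const ξ).const_add x₀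

/-- Trace inequality: if `D` is positive semidefinite and `H` is negative
semidefinite (in the quadratic-form sense), then `∑ D i j * H i j ≤ 0`. -/
lemma trace_psd_nsd {d : ℕ} {D H : Matrix (Fin d) (Fin d) ℝ}
    (hD : D.PosSemidef) (hH : ∀ ξ : Fin d → ℝ, ∑ i, ∑ j, ξ i * ξ j * H i j ≤ 0) :
    ∑ i, ∑ j, D i j * H i j ≤ 0 := by
  open scoped MatrixOrder in
  obtain ⟨S, hS⟩ := CStarAlgebra.nonneg_iff_eq_star_mul_self.mp hD.nonneg
  have expand : ∀ i j, D i j = ∑ k, S k i * S k j := by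
    intro i j; rw [hS]
    simp [Matrix.mul_apply, Matrix.star_eq_conjTranspose, Matrix.conjTranspose_apply]
  calc ∑ i, ∑ j, D i j * H i j
      = ∑ i, ∑ j, ∑ k, (S k i) * (S k j) * H i j := by
        refine Finset.sum_congr rfl fun i _ => Finset.sum_congr rfl fun j _ => ?_
        rw [expand, Finset.sum_mul]
    _ = ∑ i, ∑ k, ∑ j, (S k i) * (S k j) * H i j := by
        exact Finset.sum_congr rfl fun i _ => Finset.sum_comm
    _ = ∑ k, ∑ i, ∑ j, (S k i) * (S k j) * H i j := Finset.sum_comm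
    _ ≤ 0 := Finset.sum_nonpos fun k _ => hH (fun i => S k i)

/-- One-dimensional second derivative test at an interior maximum. -/
lemma second_test_1d {g g' : ℝ → ℝ} {ε : ℝ} (hε : 0 < ε)
    (hg : ∀ t : ℝ, |t| < ε → HasDerivAt g (g' t) t)
    (hmax : ∀ t : ℝ, |t| < ε → g t ≤ g 0)
    {q : ℝ} (hq : HasDerivAt g' q 0) (hg'0 : g' 0 = 0) : q ≤ 0 := by
  by_contra hqpos
  push_neg at hqpos
  have hslope := hasDerivAt_iff_tendsto_slope.1 hq
  have hev : ∀ᶠ t in nhdsWithin 0 {x | x ≠ 0}, 0 < slope g' 0 t :=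
    hslope.eventually (eventually_gt_nhds hqpos)
  rw [eventually_nhdsWithin_iff] at hev
  rw [Metric.eventually_nhds_iff] at hev
  obtain ⟨δ, hδ, hδ'⟩ := hev
  set t := min δ ε / 2 with ht
  have ht0 : 0 < t := by positivity
  have htδ : t < δ := by
    calc t ≤ δ / 2 := by
          apply div_le_div_of_nonneg_right (min_le_left _ _)
          norm_num
      _ < δ := by linarith
  have htε : t < ε := by
    calc t ≤ ε / 2 := by
          apply div_le_div_of_nonneg_right (min_le_right _ _)
          norm_num
      _ < ε := by linarith
  have hcont : ContinuousOn g (Set.Icc 0 t) := fun x hx => by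
    have : |x| < ε := by
      rw [abs_lt]; constructor <;> [linarith [hx.1]; linarith [hx.2]]
    exact (hg x this).continuousAt.continuousWithinAt
  have hderiv : ∀ x ∈ Set.Ioo (0:ℝ) t, HasDerivAt g (g' x) x := fun x hx => by
    have : |x| < ε := by
      rw [abs_lt]; constructor <;> [linarith [hx.1]; linarith [hx.2]]
    exact hg x this
  obtain ⟨c, hc, hceq⟩ := exists_hasDerivAt_eq_slope g g' ht0 hcont hderiv
  have hgle : g t ≤ g 0 := hmax t (by rwa [abs_of_pos ht0])
  have hle : g' c ≤ 0 := by
    rw [hceq]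
    apply div_nonpos_of_nonpos_of_nonneg <;> linarith
  have hcpos : 0 < slope g' 0 c := by
    refine hδ' ?_ (ne_of_gt hc.1)
    rw [Real.dist_eq, sub_zero, abs_of_pos hc.1]
    linarith [hc.2]
  rw [slope_def_field, hg'0] at hcpos
  have : 0 < g' c := by
    have := div_pos_iff.1 (by simpa [div_eq_mul_inv] using hcpos)
    rcases this with ⟨h1, _⟩ | ⟨_, h2⟩
    · linarith
    · linarith [hc.1]
  linarith

/-- At an interior maximum of a `C²` function, the Hessian is negative
semidefinite. -/
lemma hessian_nsd {d : ℕ} {Ω : Set (EuclideanSpace ℝ (Fin d))} (hΩ : IsOpen Ω)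
    {u : EuclideanSpace ℝ (Fin d) → ℝ} (hu : ContDiffOn ℝ 2 u Ω)
    {x₀ : EuclideanSpace ℝ (Fin d)} (hx₀ : x₀ ∈ Ω)
    (hmax : ∀ y ∈ Ω, u y ≤ u x₀) (ξ : EuclideanSpace ℝ (Fin d)) :
    ∑ i, ∑ j, ξ i * ξ j * pd d (pd d u j) i x₀ ≤ 0 := by
  obtain ⟨r, hr, hball⟩ := Metric.isOpen_iff.1 hΩ x₀ hx₀
  set ε := r / (‖ξ‖ + 1) with hε_def
  have hnorm1 : (0:ℝ) < ‖ξ‖ + 1 := by positivity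
  have hε : 0 < ε := by positivity
  have hline : ∀ t : ℝ, |t| < ε → x₀ + t • ξ ∈ Ω := by
    intro t ht
    apply hball
    rw [Metric.mem_ball, dist_eq_norm, add_sub_cancel_left, norm_smul]
    calc ‖t‖ * ‖ξ‖ ≤ |t| * (‖ξ‖ + 1) := by
          rw [Real.norm_eq_abs]
          exact mul_le_mul_of_nonneg_left (by linarith) (abs_nonneg t)
      _ < ε * (‖ξ‖ + 1) := by
          exact mul_lt_mul_of_pos_right ht hnorm1
      _ = r := by rw [hε_def]; field_simp
  have hudiff : ∀ y ∈ Ω, DifferentiableAt ℝ u y := fun y hy =>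
    (hu.differentiableOn (by norm_num)).differentiableAt (hΩ.mem_nhds hy)
  have hpddiff : ∀ j, DifferentiableAt ℝ (pd d u j) x₀ := fun j =>
    pd_differentiableAt hΩ hu j hx₀
  set g : ℝ → ℝ := fun t => u (x₀ + t • ξ) with hg_def
  set g' : ℝ → ℝ := fun t => ∑ j, ξ j * pd d u j (x₀ + t • ξ) with hg'_def
  have key : ∀ y, (fderiv ℝ u y) ξ = ∑ j, ξ j * pd d u j y := fun y =>
    clm_decomp (fderiv ℝ u y) ξ
  have hg : ∀ t : ℝ, |t| < ε → HasDerivAt g (g' t) t := by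
    intro t ht
    have h1 := (hudiff _ (hline t ht)).hasFDerivAt.comp_hasDerivAt t
      (line_hasDerivAt x₀ ξ t)
    have h2 : HasDerivAt g ((fderiv ℝ u (x₀ + t • ξ)) ξ) t := h1
    rw [key] at h2
    exact h2
  have hmaxg : ∀ t : ℝ, |t| < ε → g t ≤ g 0 := by
    intro t ht
    have := hmax _ (hline t ht)
    simpa [hg_def] using this
  have hfd0 : fderiv ℝ u x₀ = 0 := by
    apply IsLocalMax.fderiv_eq_zero
    exact Filter.eventually_of_mem (hΩ.mem_nhds hx₀) hmax
  have hg'0 : g' 0 = 0 := by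
    simp [hg'_def, pd, hfd0]
  set q : ℝ := ∑ j, ξ j * ∑ i, ξ i * pd d (pd d u j) i x₀ with hq_def
  have hq : HasDerivAt g' q 0 := by
    apply HasDerivAt.fun_sum
    intro j _
    have hpd' : DifferentiableAt ℝ (pd d u j) (x₀ + (0:ℝ) • ξ) := by
      simpa using hpddiff j
    have h1 := hpd'.hasFDerivAt.comp_hasDerivAt 0 (line_hasDerivAt x₀ ξ 0)
    have h2 := h1.const_mul (ξ j)
    have h3 : (fderiv ℝ (pd d u j) (x₀ + (0:ℝ) • ξ)) ξ
        = ∑ i, ξ i * pd d (pd d u j) i x₀ := by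
      rw [show x₀ + (0:ℝ) • ξ = x₀ by simp]
      exact clm_decomp _ ξ
    rw [h3] at h2
    exact h2
  have hqle : q ≤ 0 := second_test_1d hε hg hmaxg hq hg'0
  calc ∑ i, ∑ j, ξ i * ξ j * pd d (pd d u j) i x₀
      = q := by
        rw [hq_def, Finset.sum_comm]
        refine Finset.sum_congr rfl fun j _ => ?_
        rw [Finset.mul_sum]
        exact Finset.sum_congr rfl fun i _ => by ring
    _ ≤ 0 := hqle

/-- Continuous strong comparison principle. -/
theorem continuous_strong_comparison_principle
    (d : ℕ) (hd : 1 ≤ d)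
    (Ω : Set (EuclideanSpace ℝ (Fin d)))
    (hΩne : Ω.Nonempty) (hΩopen : IsOpen Ω) (hΩbd : Bornology.IsBounded Ω)
    (hΩconn : IsConnected Ω)
    (D : EuclideanSpace ℝ (Fin d) → Matrix (Fin d) (Fin d) ℝ)
    (hD : ∀ i j, ContDiff ℝ 1 (fun x => D x i j))
    (hDsymm : ∀ x, (D x).IsSymm)
    (lam0 Lam : ℝ) (hlam0 : 0 < lam0) (hlamLam : lam0 ≤ Lam)
    (hellip : ∀ x ∈ Ω, ∀ ξ : Fin d → ℝ,
      lam0 * (∑ i, ξ i ^ 2) ≤ (∑ i, ∑ j, ξ i * D x i j * ξ j) ∧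
      (∑ i, ∑ j, ξ i * D x i j * ξ j) ≤ Lam * (∑ i, ξ i ^ 2))
    (v : EuclideanSpace ℝ (Fin d) → EuclideanSpace ℝ (Fin d))
    (hv : ContinuousOn v Ω) (hvbd : ∃ M, ∀ x ∈ Ω, ‖v x‖ ≤ M)
    (α : EuclideanSpace ℝ (Fin d) → ℝ)
    (hα : Continuous α) (hαnn : ∀ x ∈ Ω, 0 ≤ α x)
    (c₁ c₂ : EuclideanSpace ℝ (Fin d) → ℝ)
    (hc₁ : ContDiffOn ℝ 2 c₁ Ω) (hc₁cont : ContinuousOn c₁ (closure Ω))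
    (hc₂ : ContDiffOn ℝ 2 c₂ Ω) (hc₂cont : ContinuousOn c₂ (closure Ω))
    (hL : ∀ x ∈ Ω, Lop d D v α c₁ x < Lop d D v α c₂ x)
    (hbd : ∀ x ∈ closure Ω \ Ω, c₁ x ≤ c₂ x) :
    ∀ x ∈ Ω, c₁ x < c₂ x := by
  intro x hx
  by_contra hcon
  push_neg at hcon
  set u : EuclideanSpace ℝ (Fin d) → ℝ := fun y => c₁ y - c₂ y with hu_def
  have hu : ContDiffOn ℝ 2 u Ω := hc₁.sub hc₂
  have hucont : ContinuousOn u (closure Ω) := hc₁cont.sub hc₂cont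
  have hclcomp : IsCompact (closure Ω) := hΩbd.isCompact_closure
  obtain ⟨x₁, hx₁cl, hx₁max⟩ :=
    hclcomp.exists_isMaxOn (hΩne.mono subset_closure) hucont
  have hux : 0 ≤ u x := by simp only [hu_def]; linarith
  obtain ⟨x₀, hx₀, hx₀max⟩ : ∃ x₀ ∈ Ω, ∀ y ∈ closure Ω, u y ≤ u x₀ := by
    by_cases h : x₁ ∈ Ω
    · exact ⟨x₁, h, fun y hy => hx₁max hy⟩
    · have h1 : u x₁ ≤ 0 := by
        have := hbd x₁ ⟨hx₁cl, h⟩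
        simp only [hu_def]; linarith
      refine ⟨x, hx, fun y hy => ?_⟩
      have := hx₁max hy
      simp only [Set.mem_setOf_eq] at this
      linarith
  have humax : ∀ y ∈ Ω, u y ≤ u x₀ := fun y hy => hx₀max y (subset_closure hy)
  have hux₀ : 0 ≤ u x₀ := le_trans hux (hx₀max x (subset_closure hx))
  -- first-order conditions at the interior maximum
  have hfd0 : fderiv ℝ u x₀ = 0 :=
    IsLocalMax.fderiv_eq_zero
      (Filter.eventually_of_mem (hΩopen.mem_nhds hx₀) humax)
  have hpdu0 : ∀ j, pd d u j x₀ = 0 := fun j => by simp [pd, hfd0]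
  -- differentiability of the various pieces
  have hc₁diff : ∀ y ∈ Ω, DifferentiableAt ℝ c₁ y := fun y hy =>
    (hc₁.differentiableOn (by norm_num)).differentiableAt (hΩopen.mem_nhds hy)
  have hc₂diff : ∀ y ∈ Ω, DifferentiableAt ℝ c₂ y := fun y hy =>
    (hc₂.differentiableOn (by norm_num)).differentiableAt (hΩopen.mem_nhds hy)
  have hpdsub : ∀ j, ∀ y ∈ Ω, pd d u j y = pd d c₁ j y - pd d c₂ j y := by
    intro j y hy
    simp only [pd, hu_def]
    rw [fderiv_fun_sub (hc₁diff y hy) (hc₂diff y hy)]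
    rfl
  -- the key second-order computation
  set H : Matrix (Fin d) (Fin d) ℝ := fun i j => pd d (pd d u j) i x₀ with hH_def
  have hHnsd : ∀ ξ : Fin d → ℝ, ∑ i, ∑ j, ξ i * ξ j * H i j ≤ 0 := by
    intro ξ
    exact hessian_nsd hΩopen hu hx₀ humax (WithLp.toLp 2 ξ)
  have hDpsd : (D x₀).PosSemidef := by
    refine Matrix.PosSemidef.of_dotProduct_mulVec_nonneg ?_ ?_
    · have := hDsymm x₀
      ext i j
      rw [Matrix.conjTranspose_apply]
      have := congrFun (congrFun this i) j
      simpa [Matrix.transpose_apply] using this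
    · intro ξ
      have h1 := (hellip x₀ hx₀ ξ).1
      have h2 : 0 ≤ lam0 * ∑ i, ξ i ^ 2 := by
        apply mul_nonneg hlam0.le
        exact Finset.sum_nonneg fun i _ => sq_nonneg _
      have h3 : (0:ℝ) ≤ ∑ i, ∑ j, ξ i * D x₀ i j * ξ j := le_trans h2 h1
      simp only [star_trivial, dotProduct, Matrix.mulVec, dotProduct]
      calc (0:ℝ) ≤ ∑ i, ∑ j, ξ i * D x₀ i j * ξ j := h3
        _ = ∑ i, ξ i * ∑ j, D x₀ i j * ξ j := by
            refine Finset.sum_congr rfl fun i _ => ?_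
            rw [Finset.mul_sum]
            exact Finset.sum_congr rfl fun j _ => by ring
  have htrace : ∑ i, ∑ j, D x₀ i j * H i j ≤ 0 := trace_psd_nsd hDpsd hHnsd
  -- differentiability of pd functions at x₀
  have hpdc₁ : ∀ j, DifferentiableAt ℝ (pd d c₁ j) x₀ := fun j =>
    pd_differentiableAt hΩopen hc₁ j hx₀
  have hpdc₂ : ∀ j, DifferentiableAt ℝ (pd d c₂ j) x₀ := fun j =>
    pd_differentiableAt hΩopen hc₂ j hx₀
  have hpdu : ∀ j, DifferentiableAt ℝ (pd d u j) x₀ := fun j =>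
    pd_differentiableAt hΩopen hu j hx₀
  have hDdiff : ∀ i j, DifferentiableAt ℝ (fun y => D y i j) x₀ := fun i j =>
    ((hD i j).differentiable one_ne_zero).differentiableAt
  -- the divergence-term computation
  have hstep : ∀ i, pd d (fun y => ∑ j, D y i j * pd d c₁ j y) i x₀
      = pd d (fun y => ∑ j, D y i j * pd d c₂ j y) i x₀
        + ∑ j, D x₀ i j * H i j := by
    intro i
    have hdF₂ : DifferentiableAt ℝ (fun y => ∑ j, D y i j * pd d c₂ j y) x₀ :=
      DifferentiableAt.fun_sum fun j _ => (hDdiff i j).mul (hpdc₂ j)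
    have hdFu : DifferentiableAt ℝ (fun y => ∑ j, D y i j * pd d u j y) x₀ :=
      DifferentiableAt.fun_sum fun j _ => (hDdiff i j).mul (hpdu j)
    have heq : (fun y => ∑ j, D y i j * pd d c₁ j y)
        =ᶠ[nhds x₀] fun y =>
          (∑ j, D y i j * pd d c₂ j y) + ∑ j, D y i j * pd d u j y := by
      apply Filter.eventually_of_mem (hΩopen.mem_nhds hx₀)
      intro y hy
      have hterm : ∀ j, D y i j * pd d c₁ j y
          = D y i j * pd d c₂ j y + D y i j * pd d u j y := fun j => by
        rw [hpdsub j y hy]; ring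
      simp only [hterm, Finset.sum_add_distrib]
    have hfe : fderiv ℝ (fun y => ∑ j, D y i j * pd d c₁ j y) x₀
        = fderiv ℝ (fun y =>
            (∑ j, D y i j * pd d c₂ j y) + ∑ j, D y i j * pd d u j y) x₀ :=
      heq.fderiv_eq
    have hadd : fderiv ℝ (fun y =>
        (∑ j, D y i j * pd d c₂ j y) + ∑ j, D y i j * pd d u j y) x₀
        = fderiv ℝ (fun y => ∑ j, D y i j * pd d c₂ j y) x₀
          + fderiv ℝ (fun y => ∑ j, D y i j * pd d u j y) x₀ :=
      fderiv_add hdF₂ hdFu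
    have hupart : (fderiv ℝ (fun y => ∑ j, D y i j * pd d u j y) x₀)
          (EuclideanSpace.single i 1)
        = ∑ j, D x₀ i j * H i j := by
      rw [fderiv_fun_sum (A := fun j y => D y i j * pd d u j y)
        (fun j _ => (hDdiff i j).mul (hpdu j))]
      rw [ContinuousLinearMap.sum_apply]
      refine Finset.sum_congr rfl fun j _ => ?_
      rw [fderiv_fun_mul (hDdiff i j) (hpdu j)]
      rw [ContinuousLinearMap.add_apply, ContinuousLinearMap.smul_apply,
        ContinuousLinearMap.smul_apply]
      rw [hpdu0 j]
      simp only [smul_eq_mul, zero_mul, add_zero, zero_smul]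
      rfl
    show (fderiv ℝ (fun y => ∑ j, D y i j * pd d c₁ j y) x₀)
          (EuclideanSpace.single i 1)
        = (fderiv ℝ (fun y => ∑ j, D y i j * pd d c₂ j y) x₀)
            (EuclideanSpace.single i 1) + ∑ j, D x₀ i j * H i j
    rw [hfe, hadd, ContinuousLinearMap.add_apply, hupart]
  -- the first-order term
  have hvterm : ∑ i, v x₀ i * pd d c₁ i x₀ = ∑ i, v x₀ i * pd d c₂ i x₀ := by
    refine Finset.sum_congr rfl fun i _ => ?_
    have h1 := hpdsub i x₀ hx₀
    have h2 := hpdu0 i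
    have : pd d c₁ i x₀ = pd d c₂ i x₀ := by rw [h2] at h1; linarith
    rw [this]
  -- assemble the contradiction
  have hLdiff : Lop d D v α c₂ x₀ ≤ Lop d D v α c₁ x₀ := by
    simp only [Lop]
    have hsum : ∑ i, pd d (fun y => ∑ j, D y i j * pd d c₁ j y) i x₀
        = (∑ i, pd d (fun y => ∑ j, D y i j * pd d c₂ j y) i x₀)
          + ∑ i, ∑ j, D x₀ i j * H i j := by
      rw [← Finset.sum_add_distrib]
      exact Finset.sum_congr rfl fun i _ => hstep i
    rw [hsum, hvterm]
    have hα₀ : 0 ≤ α x₀ * (c₁ x₀ - c₂ x₀) :=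
      mul_nonneg (hαnn x₀ hx₀) (by simpa [hu_def] using hux₀)
    nlinarith [htrace]
  exact absurd (hL x₀ hx₀) (not_lt.mpr hLdiff)
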